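/- Let δ_j, j = 1,...,p with δ_j = 0 for j ∈ S_0 and δ_j ≠ 0 for j ∈ S_1 = {1,...,p}∖S_0. Let d_j^{(1)} ~ N(δ_j, σ²) and d_j^{(2)} ~ N(−δ_j, σ²), all 2p variables independent. If Σ_{j∈S_1} δ_j² > c_1·σ²·p^{1/2+ε} for constants c_1 > 0 and ε > 0, then Pr(Σ_{j=1}^p d_j^{(1)}·d_j^{(2)} < 0) ≥ 1 − 2·exp(−min{Σ_{j∈S_1}δ_j²/(4σ²), (Σ_{j∈S_1}δ_j²)²/(8pσ⁴)}). -/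

import Mathlib

open MeasureTheory ProbabilityTheory Real
open scoped NNReal ENNReal

lemma integral_exp_neg_mul_sq_shift (q r : ℝ) (hq : 0 < q) :
    ∫ x : ℝ, rexp (-q * (x - r) ^ 2) = Real.sqrt (π / q) := by
  rw [integral_sub_right_eq_self (fun a => rexp (-q * a ^ 2)) r]
  exact integral_gaussian q

lemma gaussianReal_exp_quad (m b c : ℝ) {v : ℝ≥0} (hv : 0 < (v : ℝ)) (hc : 2 * c * v < 1) :
    Integrable (fun x => rexp (b * x + c * x ^ 2)) (gaussianReal m v) ∧
    ∫ x, rexp (b * x + c * x ^ 2) ∂(gaussianReal m v)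
      = (Real.sqrt (1 - 2 * c * v))⁻¹ *
        rexp ((b * v + m) ^ 2 / (2 * v * (1 - 2 * c * v)) - m ^ 2 / (2 * v)) := by
  have hvne : v ≠ 0 := by
    simpa using hv.ne'
  have h1 : (0:ℝ) < 1 - 2 * c * v := by linarith
  set q : ℝ := (1 - 2 * c * v) / (2 * v) with hqdef
  have hq : 0 < q := by positivity
  set r : ℝ := (b * v + m) / (1 - 2 * c * v) with hrdef
  set C : ℝ := (b * v + m) ^ 2 / (2 * v * (1 - 2 * c * v)) - m ^ 2 / (2 * v) with hCdef
  have key : ∀ x : ℝ, gaussianPDFReal m v x * rexp (b * x + c * x ^ 2)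
      = (Real.sqrt (2 * π * v))⁻¹ * rexp C * rexp (-q * (x - r) ^ 2) := by
    intro x
    have hexp : -(x - m) ^ 2 / (2 * (v:ℝ)) + (b * x + c * x ^ 2) = C + (-q * (x - r) ^ 2) := by
      rw [hCdef, hqdef, hrdef]
      generalize hD : 1 - 2 * c * (v:ℝ) = D at h1 ⊢
      have hc' : c = (1 - D) / (2 * (v:ℝ)) := by rw [← hD]; field_simp; ring
      rw [hc']
      have hD' := h1.ne'
      have hv' := hv.ne'
      field_simp
      ring
    rw [gaussianPDFReal, mul_assoc ((Real.sqrt (2 * π * (v:ℝ)))⁻¹), ← Real.exp_add, hexp,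
      Real.exp_add, ← mul_assoc]
  have hrw : gaussianReal m v = volume.withDensity
      (fun x => ((gaussianPDFReal m v x).toNNReal : ℝ≥0∞)) := by
    rw [gaussianReal_of_var_ne_zero m hvne]
    rfl
  have hmeas : Measurable (fun x => (gaussianPDFReal m v x).toNNReal) :=
    (measurable_gaussianPDFReal m v).real_toNNReal
  have hint : Integrable (fun x : ℝ => gaussianPDFReal m v x * rexp (b * x + c * x ^ 2)) := by
    rw [funext key]
    exact ((integrable_exp_neg_mul_sq hq).comp_sub_right r).const_mul _
  constructor
  · rw [hrw, integrable_withDensity_iff (hmeas.coe_nnreal_ennreal)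
      (Filter.Eventually.of_forall fun x => ENNReal.coe_lt_top)]
    simpa [mul_comm, Real.coe_toNNReal _ (gaussianPDFReal_nonneg m v _)] using hint
  · rw [hrw, integral_withDensity_eq_integral_smul hmeas]
    have : ∀ x : ℝ, (gaussianPDFReal m v x).toNNReal • rexp (b * x + c * x ^ 2)
        = (Real.sqrt (2 * π * v))⁻¹ * rexp C * rexp (-q * (x - r) ^ 2) := by
      intro x
      rw [NNReal.smul_def, smul_eq_mul, Real.coe_toNNReal _ (gaussianPDFReal_nonneg m v _)]
      exact key x
    rw [funext this, integral_const_mul, integral_exp_neg_mul_sq_shift q r hq]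
    have hπq : π / q = (2 * π * v) / (1 - 2 * c * v) := by
      rw [hqdef]; field_simp
    rw [hπq, Real.sqrt_div (by positivity) _]
    have h2πv : (0:ℝ) < Real.sqrt (2 * π * v) := Real.sqrt_pos.mpr (by positivity)
    field_simp

lemma sqrt_inv_le_exp {a : ℝ} (ha0 : 0 ≤ a) (ha : a ≤ 1/2) :
    (Real.sqrt (1 - a ^ 2))⁻¹ ≤ rexp (2/3 * a ^ 2) := by
  have hs : a ^ 2 ≤ 1/4 := by nlinarith
  have h1 : (0:ℝ) < 1 - a ^ 2 := by nlinarith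
  have key : rexp (-(4/3) * a ^ 2) ≤ 1 - a ^ 2 := by
    have h2 : (0:ℝ) < 1 + 4/3 * a ^ 2 := by nlinarith
    have h3 : 1 + 4/3 * a ^ 2 ≤ rexp (4/3 * a ^ 2) := by
      have := Real.add_one_le_exp (4/3 * a ^ 2); linarith
    have h4 : rexp (-(4/3) * a ^ 2) = (rexp (4/3 * a ^ 2))⁻¹ := by
      rw [← Real.exp_neg]; ring_nf
    rw [h4]
    refine (inv_anti₀ h2 h3).trans ?_
    rw [inv_le_iff_one_le_mul₀ h2]
    nlinarith
  have hsq : rexp (-(2/3) * a ^ 2) ≤ Real.sqrt (1 - a ^ 2) := by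
    rw [Real.le_sqrt' (Real.exp_pos _)]
    have h7 : rexp (-(2/3) * a ^ 2) ^ 2 = rexp (-(4/3) * a ^ 2) := by
      rw [sq, ← Real.exp_add]; ring_nf
    rw [h7]; exact key
  have h6 : (0:ℝ) < rexp (-(2/3) * a ^ 2) := Real.exp_pos _
  calc (Real.sqrt (1 - a ^ 2))⁻¹ ≤ (rexp (-(2/3) * a ^ 2))⁻¹ := inv_anti₀ h6 hsq
    _ = rexp (2/3 * a ^ 2) := by rw [← Real.exp_neg]; ring_nf

lemma integral_exp_mul_prod_gaussian (t δ : ℝ) {v : ℝ≥0} (hv : 0 < (v : ℝ))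
    (ht : 0 ≤ t) (htv : t * v ≤ 1/2) :
    Integrable (fun z : ℝ × ℝ => rexp (t * (z.1 * z.2)))
      ((gaussianReal δ v).prod (gaussianReal (-δ) v)) ∧
    ∫ z, rexp (t * (z.1 * z.2)) ∂((gaussianReal δ v).prod (gaussianReal (-δ) v))
      ≤ rexp (2/3 * (t * v) ^ 2 - t * δ ^ 2 / (1 + t * v)) := by
  have hvne : (v:ℝ) ≠ 0 := hv.ne'
  have ha0 : 0 ≤ t * (v:ℝ) := by positivity
  have hta : 2 * (t ^ 2 * v / 2) * v < 1 := by nlinarith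
  have hslice : ∀ x : ℝ, (fun y => rexp (t * (x * y)))
      = fun y => rexp ((t * x) * y + 0 * y ^ 2) := by
    intro x; funext y; ring_nf
  have hzero : (2 : ℝ) * 0 * v < 1 := by norm_num
  have hinner : ∀ x : ℝ, ∫ y, rexp (t * (x * y)) ∂(gaussianReal (-δ) v)
      = rexp ((-(t * δ)) * x + (t ^ 2 * v / 2) * x ^ 2) := by
    intro x
    rw [hslice x, (gaussianReal_exp_quad (-δ) (t * x) 0 hv hzero).2]
    rw [show (1 : ℝ) - 2 * 0 * v = 1 by ring]
    rw [Real.sqrt_one, inv_one, one_mul]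
    congr 1
    field_simp
    ring
  have hinner_int : ∀ x : ℝ, Integrable (fun y => rexp (t * (x * y))) (gaussianReal (-δ) v) := by
    intro x
    rw [hslice x]
    exact (gaussianReal_exp_quad (-δ) (t * x) 0 hv hzero).1
  have houter := gaussianReal_exp_quad δ (-(t * δ)) (t ^ 2 * v / 2) hv hta
  have hmeas : AEStronglyMeasurable (fun z : ℝ × ℝ => rexp (t * (z.1 * z.2)))
      ((gaussianReal δ v).prod (gaussianReal (-δ) v)) := by
    apply Continuous.aestronglyMeasurable
    exact (continuous_const.mul (continuous_fst.mul continuous_snd)).rexp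
  have hint : Integrable (fun z : ℝ × ℝ => rexp (t * (z.1 * z.2)))
      ((gaussianReal δ v).prod (gaussianReal (-δ) v)) := by
    rw [integrable_prod_iff hmeas]
    constructor
    · exact Filter.Eventually.of_forall fun x => hinner_int x
    · have : (fun x => ∫ y, ‖rexp (t * (x * y))‖ ∂(gaussianReal (-δ) v))
          = fun x => rexp ((-(t * δ)) * x + (t ^ 2 * v / 2) * x ^ 2) := by
        funext x
        rw [← hinner x]
        congr 1
        funext y
        exact Real.norm_of_nonneg (Real.exp_pos _).le
      rw [this]
      exact houter.1
  refine ⟨hint, ?_⟩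
  rw [integral_prod _ hint]
  simp_rw [hinner]
  rw [houter.2]
  have h1a : (0:ℝ) < 1 - 2 * (t ^ 2 * v / 2) * v := by linarith
  have hexp_eq : ((-(t * δ)) * v + δ) ^ 2 / (2 * v * (1 - 2 * (t ^ 2 * v / 2) * v))
      - δ ^ 2 / (2 * v) = - (t * δ ^ 2) / (1 + t * v) := by
    have h1pa : (0:ℝ) < 1 + t * v := by linarith
    have h1m : (0:ℝ) < 1 - t * v := by linarith
    have hfac : (1:ℝ) - 2 * (t ^ 2 * v / 2) * v = (1 - t * v) * (1 + t * v) := by ring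
    rw [hfac]
    field_simp [h1pa.ne', h1m.ne', hvne]
    ring
  rw [hexp_eq]
  have hsq : (1:ℝ) - 2 * (t ^ 2 * v / 2) * v = 1 - (t * v) ^ 2 := by ring
  rw [hsq]
  have := sqrt_inv_le_exp ha0 htv
  calc (Real.sqrt (1 - (t * (v:ℝ)) ^ 2))⁻¹ * rexp (-(t * δ ^ 2) / (1 + t * v))
      ≤ rexp (2/3 * (t * v) ^ 2) * rexp (-(t * δ ^ 2) / (1 + t * v)) := by
        apply mul_le_mul_of_nonneg_right this (Real.exp_pos _).le
    _ = rexp (2/3 * (t * v) ^ 2 - t * δ ^ 2 / (1 + t * v)) := by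
        rw [← Real.exp_add]; ring_nf

lemma mgf_sum_prod_pairs {Ω : Type*} [MeasurableSpace Ω] (P : Measure Ω) [IsProbabilityMeasure P]
    {p : ℕ} (d₁ d₂ : Fin p → Ω → ℝ)
    (hm₁ : ∀ j, Measurable (d₁ j)) (hm₂ : ∀ j, Measurable (d₂ j))
    (hindep : iIndepFun (Sum.elim d₁ d₂) P) (t : ℝ)
    (hint : ∀ j, Integrable (fun ω => rexp (t * (d₁ j ω * d₂ j ω))) P)
    (s : Finset (Fin p)) :
    Integrable (fun ω => rexp (t * ∑ j ∈ s, d₁ j ω * d₂ j ω)) P ∧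
    ∫ ω, rexp (t * ∑ j ∈ s, d₁ j ω * d₂ j ω) ∂P
      = ∏ j ∈ s, ∫ ω, rexp (t * (d₁ j ω * d₂ j ω)) ∂P := by
  classical
  have hm : ∀ k : (Fin p) ⊕ (Fin p), Measurable (Sum.elim d₁ d₂ k) := by
    intro k; cases k with
    | inl j => exact hm₁ j
    | inr j => exact hm₂ j
  induction s using Finset.induction_on with
  | empty => simp
  | @insert i s his ih =>
    -- independence of the i-th pair product from the sum over s
    have hdisj : Disjoint ({Sum.inl i, Sum.inr i} : Finset ((Fin p) ⊕ (Fin p)))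
        (s.image Sum.inl ∪ s.image Sum.inr) := by
      simp only [Finset.disjoint_left, Finset.mem_insert, Finset.mem_singleton,
        Finset.mem_union, Finset.mem_image]
      rintro k (rfl | rfl) hk
      · rcases hk with ⟨j, hj, hjk⟩ | ⟨j, hj, hjk⟩
        · cases hjk; exact his hj
        · simp at hjk
      · rcases hk with ⟨j, hj, hjk⟩ | ⟨j, hj, hjk⟩
        · simp at hjk
        · cases hjk; exact his hj
    set S : Finset ((Fin p) ⊕ (Fin p)) := {Sum.inl i, Sum.inr i} with hS
    set T : Finset ((Fin p) ⊕ (Fin p)) := s.image Sum.inl ∪ s.image Sum.inr with hT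
    have hbase := hindep.indepFun_finset S T hdisj hm
    have hinlS : (Sum.inl i : (Fin p) ⊕ (Fin p)) ∈ S := by simp [hS]
    have hinrS : (Sum.inr i : (Fin p) ⊕ (Fin p)) ∈ S := by simp [hS]
    have hinlT : ∀ j ∈ s, (Sum.inl j : (Fin p) ⊕ (Fin p)) ∈ T := by
      intro j hj; simp [hT, hj]
    have hinrT : ∀ j ∈ s, (Sum.inr j : (Fin p) ⊕ (Fin p)) ∈ T := by
      intro j hj; simp [hT, hj]
    let φ : (∀ _ : {x // x ∈ S}, ℝ) → ℝ :=
      fun f => rexp (t * (f ⟨Sum.inl i, hinlS⟩ * f ⟨Sum.inr i, hinrS⟩))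
    let ψ : (∀ _ : {x // x ∈ T}, ℝ) → ℝ :=
      fun f => rexp (t * ∑ j ∈ s.attach, f ⟨Sum.inl j.1, hinlT j.1 j.2⟩ * f ⟨Sum.inr j.1, hinrT j.1 j.2⟩)
    have hφ : Measurable φ := by
      have hsum : Measurable fun f : {x // x ∈ S} → ℝ =>
          f ⟨Sum.inl i, hinlS⟩ * f ⟨Sum.inr i, hinrS⟩ :=
        (measurable_pi_apply _).mul (measurable_pi_apply _)
      exact (hsum.const_mul t).exp
    have hψ : Measurable ψ := by
      have hsum : Measurable fun f : {x // x ∈ T} → ℝ =>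
          ∑ j ∈ s.attach, f ⟨Sum.inl j.1, hinlT j.1 j.2⟩ * f ⟨Sum.inr j.1, hinrT j.1 j.2⟩ :=
        Finset.measurable_sum _ fun j _ => (measurable_pi_apply _).mul (measurable_pi_apply _)
      exact (hsum.const_mul t).exp
    have hcomp := hbase.comp hφ hψ
    have hIndep : IndepFun (fun ω => rexp (t * (d₁ i ω * d₂ i ω)))
        (fun ω => rexp (t * ∑ j ∈ s, d₁ j ω * d₂ j ω)) P := by
      have h1 : (φ ∘ fun a (k : {x // x ∈ S}) => Sum.elim d₁ d₂ k.1 a)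
          = fun ω => rexp (t * (d₁ i ω * d₂ i ω)) := rfl
      have h2 : (ψ ∘ fun a (k : {x // x ∈ T}) => Sum.elim d₁ d₂ k.1 a)
          = fun ω => rexp (t * ∑ j ∈ s, d₁ j ω * d₂ j ω) := by
        funext ω
        simp only [Function.comp_apply, ψ, Sum.elim_inl, Sum.elim_inr]
        congr 1
        rw [Finset.sum_attach s (fun j => d₁ j ω * d₂ j ω)]
      rw [h1, h2] at hcomp
      exact hcomp
    have hsplit : (fun ω => rexp (t * ∑ j ∈ insert i s, d₁ j ω * d₂ j ω))
        = fun ω => rexp (t * (d₁ i ω * d₂ i ω)) * rexp (t * ∑ j ∈ s, d₁ j ω * d₂ j ω) := by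
      funext ω
      rw [Finset.sum_insert his, ← Real.exp_add]
      ring_nf
    constructor
    · rw [hsplit]
      exact hIndep.integrable_mul (hint i) ih.1
    · rw [hsplit]
      have hmul := hIndep.integral_mul_eq_mul_integral (hint i).aestronglyMeasurable ih.1.aestronglyMeasurable
      have : ((fun ω => rexp (t * (d₁ i ω * d₂ i ω))) *
          fun ω => rexp (t * ∑ j ∈ s, d₁ j ω * d₂ j ω))
          = fun ω => rexp (t * (d₁ i ω * d₂ i ω)) * rexp (t * ∑ j ∈ s, d₁ j ω * d₂ j ω) := rfl
      rw [this] at hmul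
      rw [hmul, Finset.prod_insert his, ih.2]

lemma scalar_bound (v Δ : ℝ) (p : ℕ) (hp : 0 < p) (hv : 0 < v) (hΔ : 0 < Δ)
    {t : ℝ} (htdef : t = min (1/(2*v)) (Δ/(2*p*v^2))) :
    (p : ℝ) * (2/3 * (t*v)^2) - t * Δ / (1 + t*v) ≤ -min (Δ/(4*v)) (Δ^2/(8*p*v^2)) := by
  have hpR : (0:ℝ) < p := Nat.cast_pos.mpr hp
  rcases le_total (1/(2*v)) (Δ/(2*(p:ℝ)*v^2)) with h | h
  · rw [min_eq_left h] at htdef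
    subst htdef
    have ha : (1/(2*v)) * v = 1/2 := by field_simp
    rw [ha]
    have hpvΔ : (p:ℝ) * v ≤ Δ := by
      rw [div_le_div_iff₀ (by positivity) (by positivity)] at h
      nlinarith
    have hLHS : (p:ℝ) * (2/3 * (1/2)^2) - (1/(2*v)) * Δ / (1 + 1/2) = p/6 - Δ/(3*v) := by
      field_simp
      ring
    rw [hLHS]
    rcases le_total Δ (2*(p:ℝ)*v) with h2 | h2
    · refine le_trans ?_ (neg_le_neg (min_le_right _ _))
      have expand : (p:ℝ)/6 - Δ/(3*v) + Δ^2/(8*p*v^2)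
          = (4*(p:ℝ)^2*v^2 - 8*p*v*Δ + 3*Δ^2) / (24*p*v^2) := by
        field_simp
        ring
      have key : (Δ - 2*(p:ℝ)*v)*(3*Δ - 2*(p:ℝ)*v) ≤ 0 := by nlinarith
      have h3 : (p:ℝ)/6 - Δ/(3*v) + Δ^2/(8*p*v^2) ≤ 0 := by
        rw [expand]
        apply div_nonpos_of_nonpos_of_nonneg _ (by positivity)
        nlinarith
      linarith
    · refine le_trans ?_ (neg_le_neg (min_le_left _ _))
      have h12 : (p:ℝ)/6 ≤ Δ/(12*v) := by
        rw [div_le_div_iff₀ (by norm_num) (by positivity)]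
        nlinarith
      have h34 : Δ/(3*v) - Δ/(4*v) = Δ/(12*v) := by
        field_simp
        ring
      linarith
  · rw [min_eq_right h] at htdef
    subst htdef
    have hav : Δ/(2*(p:ℝ)*v^2) * v = Δ/(2*p*v) := by
      field_simp
    rw [hav]
    have ha2 : Δ/(2*(p:ℝ)*v) ≤ 1/2 := by
      rw [div_le_div_iff₀ (by positivity) (by norm_num)]
      rw [div_le_div_iff₀ (by positivity) (by positivity)] at h
      nlinarith
    refine le_trans ?_ (neg_le_neg (min_le_right _ _))
    have h1a : (0:ℝ) < 1 + Δ/(2*(p:ℝ)*v) := by positivity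
    have hfrac : 7/12 ≤ 1/(1 + Δ/(2*(p:ℝ)*v)) := by
      rw [le_div_iff₀ h1a]
      nlinarith
    have e1 : (p:ℝ) * (2/3 * (Δ/(2*(p:ℝ)*v))^2) = Δ^2/(6*p*v^2) := by
      field_simp
      ring
    have e2 : Δ/(2*(p:ℝ)*v^2) * Δ / (1 + Δ/(2*(p:ℝ)*v))
        = Δ^2/(2*p*v^2) * (1/(1 + Δ/(2*(p:ℝ)*v))) := by
      rw [div_eq_mul_inv _ (1 + Δ/(2*(p:ℝ)*v)), div_eq_mul_inv (Δ^2) _]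
      ring
    have e3 : Δ^2/(2*(p:ℝ)*v^2) * (7/12) ≤ Δ^2/(2*(p:ℝ)*v^2) * (1/(1 + Δ/(2*(p:ℝ)*v))) :=
      mul_le_mul_of_nonneg_left hfrac (by positivity)
    have e4 : Δ^2/(6*(p:ℝ)*v^2) - Δ^2/(2*(p:ℝ)*v^2) * (7/12) = -(Δ^2/(8*p*v^2)) := by
      field_simp
      ring
    rw [e1, e2]
    linarith

/-- Label-switching detection: with independent `d_j^{(1)} ~ N(δ_j, σ²)` and
`d_j^{(2)} ~ N(−δ_j, σ²)`, if `Σ_{j∈S₁} δ_j² > c₁ σ² p^{1/2+ε}` then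
`Σ_j d_j^{(1)} d_j^{(2)} < 0` with high probability. -/
theorem label_switching_sign_detection
    {Ω : Type*} [MeasurableSpace Ω] (P : Measure Ω) [IsProbabilityMeasure P]
    (p : ℕ) (hp : 0 < p) (σ : ℝ) (hσ : 0 < σ)
    (δ : Fin p → ℝ) (S₀ S₁ : Finset (Fin p)) (hS₁ : S₁ = S₀ᶜ)
    (hδ₀ : ∀ j ∈ S₀, δ j = 0) (hδ₁ : ∀ j ∈ S₁, δ j ≠ 0)
    (d₁ d₂ : Fin p → Ω → ℝ)
    (hm₁ : ∀ j, Measurable (d₁ j)) (hm₂ : ∀ j, Measurable (d₂ j))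
    (hindep : iIndepFun (Sum.elim d₁ d₂) P)
    (hd₁ : ∀ j, P.map (d₁ j) = gaussianReal (δ j) ⟨σ ^ 2, sq_nonneg σ⟩)
    (hd₂ : ∀ j, P.map (d₂ j) = gaussianReal (-δ j) ⟨σ ^ 2, sq_nonneg σ⟩)
    (c₁ ε : ℝ) (hc₁ : 0 < c₁) (hε : 0 < ε)
    (hsignal : ∑ j ∈ S₁, δ j ^ 2 > c₁ * σ ^ 2 * (p : ℝ) ^ ((1 : ℝ) / 2 + ε)) :
    (P {ω | ∑ j, d₁ j ω * d₂ j ω < 0}).toReal ≥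
      1 - 2 * Real.exp (-min ((∑ j ∈ S₁, δ j ^ 2) / (4 * σ ^ 2))
        ((∑ j ∈ S₁, δ j ^ 2) ^ 2 / (8 * p * σ ^ 4))) := by
  classical
  set v : ℝ≥0 := ⟨σ ^ 2, sq_nonneg σ⟩ with hvdef
  have hv : 0 < (v : ℝ) := by
    show (0:ℝ) < σ ^ 2
    positivity
  have hvσ : (v : ℝ) = σ ^ 2 := rfl
  have hppos : (0:ℝ) < (p : ℝ) := Nat.cast_pos.mpr hp
  set Δ : ℝ := ∑ j ∈ S₁, δ j ^ 2 with hΔdef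
  have hΔ : 0 < Δ := by
    refine lt_trans ?_ hsignal
    exact mul_pos (mul_pos hc₁ (by positivity)) (Real.rpow_pos_of_pos hppos _)
  have hΔall : ∑ j, δ j ^ 2 = Δ := by
    rw [hΔdef, hS₁]
    rw [← Finset.sum_add_sum_compl S₀ (fun j => δ j ^ 2)]
    have h0 : ∑ j ∈ S₀, δ j ^ 2 = 0 := Finset.sum_eq_zero fun j hj => by
      rw [hδ₀ j hj]; ring
    rw [h0, zero_add]
  set t : ℝ := min (1/(2*(v:ℝ))) (Δ/(2*p*(v:ℝ)^2)) with htdef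
  have ht0 : 0 < t := lt_min (by positivity) (by positivity)
  have htv : t * (v:ℝ) ≤ 1/2 := by
    have h1 : t ≤ 1/(2*(v:ℝ)) := min_le_left _ _
    have h2 : t * (v:ℝ) ≤ (1/(2*(v:ℝ))) * (v:ℝ) := mul_le_mul_of_nonneg_right h1 hv.le
    have h3 : (1/(2*(v:ℝ))) * (v:ℝ) = 1/2 := by field_simp
    linarith
  -- per-coordinate integrability and bound
  have hpair_meas : ∀ j, Measurable fun ω => (d₁ j ω, d₂ j ω) :=
    fun j => (hm₁ j).prodMk (hm₂ j)
  have hmap : ∀ j, P.map (fun ω => (d₁ j ω, d₂ j ω))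
      = (gaussianReal (δ j) v).prod (gaussianReal (-(δ j)) v) := by
    intro j
    rw [← hd₁ j, ← hd₂ j]
    exact (indepFun_iff_map_prod_eq_prod_map_map
      (hm₁ j).aemeasurable (hm₂ j).aemeasurable).1
      (hindep.indepFun (show (Sum.inl j : Fin p ⊕ Fin p) ≠ Sum.inr j by simp))
  have hcontf : ∀ j, AEStronglyMeasurable (fun z : ℝ × ℝ => rexp (t * (z.1 * z.2)))
      (P.map (fun ω => (d₁ j ω, d₂ j ω))) := fun j =>
    ((continuous_const.mul (continuous_fst.mul continuous_snd)).rexp).aestronglyMeasurable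
  have hintj : ∀ j, Integrable (fun ω => rexp (t * (d₁ j ω * d₂ j ω))) P := by
    intro j
    have h3 := (integral_exp_mul_prod_gaussian t (δ j) hv ht0.le htv).1
    rw [← hmap j] at h3
    exact (integrable_map_measure (hcontf j) (hpair_meas j).aemeasurable).1 h3
  have hvalj : ∀ j, ∫ ω, rexp (t * (d₁ j ω * d₂ j ω)) ∂P
      ≤ rexp (2/3 * (t * (v:ℝ)) ^ 2 - t * (δ j) ^ 2 / (1 + t * (v:ℝ))) := by
    intro j
    have h4 := (integral_exp_mul_prod_gaussian t (δ j) hv ht0.le htv).2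
    rw [← hmap j, integral_map (hpair_meas j).aemeasurable (hcontf j)] at h4
    exact h4
  -- mgf of the sum
  have hmgf := mgf_sum_prod_pairs P d₁ d₂ hm₁ hm₂ hindep t hintj Finset.univ
  set X : Ω → ℝ := fun ω => ∑ j, d₁ j ω * d₂ j ω with hXdef
  have hX_meas : Measurable X :=
    Finset.measurable_sum Finset.univ fun j _ => (hm₁ j).mul (hm₂ j)
  have hcher : (P {ω | 0 ≤ X ω}).toReal ≤ ∫ ω, rexp (t * X ω) ∂P := by
    have := measure_ge_le_exp_mul_mgf (X := X) (μ := P) 0 ht0.le hmgf.1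
    rw [← measureReal_def]
    simpa [mgf] using this
  -- bound the mgf
  have hprod_le : ∫ ω, rexp (t * X ω) ∂P
      ≤ rexp ((p:ℝ) * (2/3 * (t*(v:ℝ))^2) - t * Δ / (1 + t*(v:ℝ))) := by
    rw [show (fun ω => rexp (t * X ω)) = fun ω => rexp (t * ∑ j, d₁ j ω * d₂ j ω) from rfl]
    rw [hmgf.2]
    have step1 : ∏ j, ∫ ω, rexp (t * (d₁ j ω * d₂ j ω)) ∂P
        ≤ ∏ j, rexp (2/3 * (t * (v:ℝ)) ^ 2 - t * (δ j) ^ 2 / (1 + t * (v:ℝ))) := by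
      apply Finset.prod_le_prod
      · intro j _
        exact integral_nonneg fun ω => (Real.exp_pos _).le
      · intro j _
        exact hvalj j
    refine step1.trans ?_
    rw [← Real.exp_sum]
    apply Real.exp_le_exp.2
    rw [Finset.sum_sub_distrib, Finset.sum_const, Finset.card_univ, Fintype.card_fin]
    have : ∑ j, t * (δ j) ^ 2 / (1 + t * (v:ℝ)) = t * Δ / (1 + t * (v:ℝ)) := by
      rw [← Finset.sum_div, ← Finset.mul_sum, hΔall]
    rw [this, nsmul_eq_mul]
  have hnum := scalar_bound (v:ℝ) Δ p hp hv hΔ htdef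
  have hfinal : (P {ω | 0 ≤ X ω}).toReal
      ≤ rexp (-min (Δ/(4*(v:ℝ))) (Δ^2/(8*p*(v:ℝ)^2))) := by
    refine hcher.trans (hprod_le.trans ?_)
    exact Real.exp_le_exp.2 hnum
  -- convert min to σ form
  have hminconv : min (Δ/(4*(v:ℝ))) (Δ^2/(8*p*(v:ℝ)^2))
      = min (Δ / (4 * σ ^ 2)) (Δ ^ 2 / (8 * p * σ ^ 4)) := by
    rw [hvσ]
    congr 1
    ring_nf
  rw [hminconv] at hfinal
  -- complement
  have hsetc : {ω | ∑ j, d₁ j ω * d₂ j ω < 0} = {ω | 0 ≤ X ω}ᶜ := by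
    ext ω
    simp [hXdef, not_le]
  have hmeasset : MeasurableSet {ω | 0 ≤ X ω} := measurableSet_le measurable_const hX_meas
  have hsum1 : (P {ω | 0 ≤ X ω}).toReal + (P {ω | 0 ≤ X ω}ᶜ).toReal = 1 := by
    rw [← ENNReal.toReal_add (measure_ne_top _ _) (measure_ne_top _ _),
      measure_add_measure_compl hmeasset, measure_univ, ENNReal.toReal_one]
  rw [hsetc]
  have hexp_pos : 0 < rexp (-min (Δ / (4 * σ ^ 2)) (Δ ^ 2 / (8 * p * σ ^ 4))) := Real.exp_pos _
  linarith
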